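/- Let k ≥ 1 and r ≥ 2 be integers. There exists a function χ from the subsets of [2k−1] to {1,…,k} such that there is no monochromatic induced copy of the r-diamond ◊_r: there do not exist r+2 pairwise distinct subsets X, Y_1,…,Y_r, Z of [2k−1], all with the same χ-value, such that X ⊆ Y_i ⊆ Z for every i and such that for all i ≠ j neither Y_i ⊆ Y_j nor Y_j ⊆ Y_i. (That is, R^♯_k(𝓑 | ◊_r) ≥ 2k.) -/
import Mathlib


theorem stmt11 (k r : ℕ) (hk : 1 ≤ k) (hr : 2 ≤ r) :
    ∃ χ : Finset (Fin (2 * k - 1)) → Fin k,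
      ¬ ∃ (X Z : Finset (Fin (2 * k - 1))) (Y : Fin r → Finset (Fin (2 * k - 1))),
          Function.Injective Y ∧ (∀ i, X ≠ Y i) ∧ (∀ i, Y i ≠ Z) ∧ X ≠ Z ∧
          (∀ i, χ (Y i) = χ X) ∧ χ Z = χ X ∧
          (∀ i, X ⊆ Y i ∧ Y i ⊆ Z) ∧
          ∀ i j, i ≠ j → ¬ Y i ⊆ Y j := by
  refine ⟨fun S => ⟨S.card / 2, ?_⟩, ?_⟩
  · have h1 : S.card ≤ 2 * k - 1 := by
      simpa using S.card_le_card (Finset.subset_univ S)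
    have h2 : S.card < 2 * k := by omega
    exact Nat.div_lt_of_lt_mul h2
  · rintro ⟨X, Z, Y, hinj, hXY, hYZ, hXZ, hcY, hcZ, hsub, hanti⟩
    have i0 : Fin r := ⟨0, by omega⟩
    have h1 : X ⊂ Y i0 := lt_of_le_of_ne (hsub i0).1 (hXY i0)
    have h2 : Y i0 ⊂ Z := lt_of_le_of_ne (hsub i0).2 (hYZ i0)
    have c1 : X.card < (Y i0).card := Finset.card_lt_card h1
    have c2 : (Y i0).card < Z.card := Finset.card_lt_card h2
    have e1 : (Y i0).card / 2 = X.card / 2 := congrArg Fin.val (hcY i0)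
    have e2 : Z.card / 2 = X.card / 2 := congrArg Fin.val hcZ
    omega
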